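/- Let Y be a poset, B the set of two-element comparable subsets of Y, and Ω the set of sections σ : B → Y (σ(b) ∈ b) with the pointwise partial order. Suppose y₁, y₂ ∈ Y are comparable, and suppose there are sections σ₁ ≤ σ₂ and σ₂' ≤ σ₁' in Ω such that σ₁ and σ₁' are y₁-avoiding while σ₂ and σ₂' are y₂-avoiding. Then y₁ = y₂. -/
import Mathlib


/-- Two elements of a poset are comparable. -/
def Cmp {Y : Type*} [PartialOrder Y] (y y' : Y) : Prop := y ≤ y' ∨ y' ≤ y

/-- A section of the set `B` of two-element comparable subsets of `Y`,
encoded as a symmetric function choosing one element of each such pair. -/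
def IsSection {Y : Type*} [PartialOrder Y] (σ : Y → Y → Y) : Prop :=
  (∀ y y', σ y y' = σ y' y) ∧
  ∀ y y', y ≠ y' → Cmp y y' → σ y y' = y ∨ σ y y' = y'

/-- A section is `z`-avoiding if it never chooses `z` from a pair containing `z`. -/
def Avoiding {Y : Type*} [PartialOrder Y] (σ : Y → Y → Y) (z : Y) : Prop :=
  ∀ y, y ≠ z → Cmp z y → σ z y ≠ z

/-- The pointwise order on sections: `σ ≤ σ'` iff `σ(b) ≤ σ'(b)` for all `b ∈ B`. -/
def SecLE {Y : Type*} [PartialOrder Y] (σ σ' : Y → Y → Y) : Prop :=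
  ∀ y y', y ≠ y' → Cmp y y' → σ y y' ≤ σ' y y'

/-- Four-section lemma: if `σ₁ ≤ σ₂` and `σ₂' ≤ σ₁'` with `σ₁, σ₁'`
`y₁`-avoiding and `σ₂, σ₂'` `y₂`-avoiding, where `y₁, y₂` are comparable,
then `y₁ = y₂`. -/
theorem avoiding_four_sections {Y : Type*} [PartialOrder Y]
    {A B C D : Y → Y → Y}
    (hA : IsSection A) (hB : IsSection B) (hC : IsSection C) (hD : IsSection D)
    {y₁ y₂ : Y} (hcmp : Cmp y₁ y₂)
    (haA : Avoiding A y₁) (haB : Avoiding B y₁)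
    (haC : Avoiding C y₂) (haD : Avoiding D y₂)
    (hAC : SecLE A C) (hDB : SecLE D B) : y₁ = y₂ := by
  by_contra hne
  have hne' : y₂ ≠ y₁ := Ne.symm hne
  have hcmp' : Cmp y₂ y₁ := Or.symm hcmp
  -- values on the pair {y₁, y₂}
  have hAv : A y₁ y₂ = y₂ := by
    rcases hA.2 y₁ y₂ hne hcmp with h | h
    · exact absurd h (haA y₂ hne' hcmp)
    · exact h
  have hBv : B y₁ y₂ = y₂ := by
    rcases hB.2 y₁ y₂ hne hcmp with h | h
    · exact absurd h (haB y₂ hne' hcmp)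
    · exact h
  have hCv : C y₁ y₂ = y₁ := by
    rcases hC.2 y₁ y₂ hne hcmp with h | h
    · exact h
    · exact absurd ((hC.1 y₂ y₁).trans h) (haC y₁ hne hcmp')
  have hDv : D y₁ y₂ = y₁ := by
    rcases hD.2 y₁ y₂ hne hcmp with h | h
    · exact h
    · exact absurd ((hD.1 y₂ y₁).trans h) (haD y₁ hne hcmp')
  have h1 : y₂ ≤ y₁ := by
    have := hAC y₁ y₂ hne hcmp
    rwa [hAv, hCv] at this
  have h2 : y₁ ≤ y₂ := by
    have := hDB y₁ y₂ hne hcmp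
    rwa [hDv, hBv] at this
  exact hne (le_antisymm h2 h1)
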